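/- For α > 0 and a continuous function f on [a,x] with 0 < a < x, the limit as ρ → 0⁺ of the Katugampola fractional integral ^ρI^α_{a+}f(x) equals the Hadamard fractional integral H^α_{a+}f(x) = (1/Γ(α)) ∫_a^x (ln(x/t))^{α-1} f(t)/t dt. -/

import Mathlib

open MeasureTheory intervalIntegral Real Filter

/-- Uniform bounds on `s ^ (ρ - 1)` for `s ∈ [a, x]`, `ρ ∈ (0, 1]`. -/
lemma katu_rpow_bounds {a x s ρ : ℝ} (ha : 0 < a) (hs : s ∈ Set.Icc a x)
    (hρ : ρ ∈ Set.Ioc 0 1) :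
    min 1 x⁻¹ ≤ s ^ (ρ - 1) ∧ s ^ (ρ - 1) ≤ max 1 a⁻¹ := by
  have hs0 : 0 < s := lt_of_lt_of_le ha hs.1
  have hx0 : 0 < x := lt_of_lt_of_le hs0 hs.2
  have h1 : -1 ≤ ρ - 1 := by linarith [hρ.1]
  have h2 : ρ - 1 ≤ 0 := by linarith [hρ.2]
  rcases le_or_gt 1 s with h | h
  · constructor
    · calc min 1 x⁻¹ ≤ x⁻¹ := min_le_right _ _
        _ ≤ s⁻¹ := by
          apply inv_anti₀ hs0 hs.2
        _ = s ^ (-1 : ℝ) := (Real.rpow_neg_one s).symm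
        _ ≤ s ^ (ρ - 1) := Real.rpow_le_rpow_of_exponent_le h h1
    · calc s ^ (ρ - 1) ≤ s ^ (0 : ℝ) := Real.rpow_le_rpow_of_exponent_le h h2
        _ = 1 := Real.rpow_zero s
        _ ≤ max 1 a⁻¹ := le_max_left _ _
  · constructor
    · calc min 1 x⁻¹ ≤ 1 := min_le_left _ _
        _ = s ^ (0 : ℝ) := (Real.rpow_zero s).symm
        _ ≤ s ^ (ρ - 1) := Real.rpow_le_rpow_of_exponent_ge hs0 h.le h2
    · calc s ^ (ρ - 1) ≤ s ^ (-1 : ℝ) := Real.rpow_le_rpow_of_exponent_ge hs0 h.le h1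
        _ = s⁻¹ := Real.rpow_neg_one s
        _ ≤ a⁻¹ := inv_anti₀ ha hs.1
        _ ≤ max 1 a⁻¹ := le_max_right _ _

/-- Bounds on `(x^ρ - t^ρ)/ρ` for `t ∈ [a, x]`, `ρ ∈ (0, 1]`. -/
lemma katu_diff_bounds {a x t ρ : ℝ} (ha : 0 < a) (ht : t ∈ Set.Icc a x)
    (hρ : ρ ∈ Set.Ioc 0 1) :
    min 1 x⁻¹ * (x - t) ≤ (x ^ ρ - t ^ ρ) / ρ ∧
      (x ^ ρ - t ^ ρ) / ρ ≤ max 1 a⁻¹ * (x - t) := by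
  have hρ0 : 0 < ρ := hρ.1
  have hint : (∫ s in t..x, s ^ (ρ - 1)) = (x ^ ρ - t ^ ρ) / ρ := by
    rw [integral_rpow (Or.inl (by linarith))]
    norm_num
  have hii : IntervalIntegrable (fun s : ℝ => s ^ (ρ - 1)) volume t x :=
    intervalIntegral.intervalIntegrable_rpow' (by linarith)
  have hic : ∀ c : ℝ, IntervalIntegrable (fun _ : ℝ => c) volume t x := fun c =>
    intervalIntegrable_const
  constructor
  · have hmono := intervalIntegral.integral_mono_on ht.2 (hic (min 1 x⁻¹)) hii
      (fun s hs => (katu_rpow_bounds ha ⟨le_trans ht.1 hs.1, hs.2⟩ hρ).1)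
    rw [hint] at hmono
    simpa [smul_eq_mul, mul_comm] using hmono
  · have hmono := intervalIntegral.integral_mono_on ht.2 hii (hic (max 1 a⁻¹))
      (fun s hs => (katu_rpow_bounds ha ⟨le_trans ht.1 hs.1, hs.2⟩ hρ).2)
    rw [hint] at hmono
    simpa [smul_eq_mul, mul_comm] using hmono

theorem katugampola_tendsto_hadamard (a x α : ℝ) (ha : 0 < a) (hax : a < x)
    (hα : 0 < α) (f : ℝ → ℝ) (hf : ContinuousOn f (Set.Icc a x)) :
    Tendsto (fun ρ : ℝ =>
        (ρ ^ (1 - α) / Real.Gamma α) *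
          ∫ t in a..x, t ^ (ρ - 1) * (x ^ ρ - t ^ ρ) ^ (α - 1) * f t)
      (nhdsWithin 0 (Set.Ioi (0 : ℝ)))
      (nhds ((1 / Real.Gamma α) * ∫ t in a..x, (Real.log (x / t)) ^ (α - 1) * (f t / t))) := by
  have hx0 : 0 < x := lt_trans ha hax
  set c1 : ℝ := min 1 x⁻¹ with hc1def
  set c2 : ℝ := max 1 a⁻¹ with hc2def
  have hc1 : 0 < c1 := lt_min one_pos (inv_pos.2 hx0)
  have hc2 : 0 < c2 := lt_of_lt_of_le one_pos (le_max_left _ _)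
  obtain ⟨M0, hM0⟩ := isCompact_Icc.exists_bound_of_continuousOn hf
  set M : ℝ := max M0 0 with hMdef
  have hM : ∀ t ∈ Set.Icc a x, |f t| ≤ M := fun t ht =>
    le_trans (by simpa [Real.norm_eq_abs] using hM0 t ht) (le_max_left _ _)
  have hM0' : 0 ≤ M := le_max_right _ _
  set F : ℝ → ℝ → ℝ := fun ρ t => t ^ (ρ - 1) * ((x ^ ρ - t ^ ρ) / ρ) ^ (α - 1) * f t
    with hFdef
  set L : ℝ → ℝ := fun t => (Real.log (x / t)) ^ (α - 1) * (f t / t) with hLdef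
  set bound : ℝ → ℝ := fun t =>
    c2 * ((c2 ^ (α - 1) + c1 ^ (α - 1)) * (x - t) ^ (α - 1)) * M with hbounddef
  -- a.e. t ≠ x
  have hne : ∀ᵐ t : ℝ ∂volume, t ≠ x := by
    rw [ae_iff]
    have : {t : ℝ | ¬t ≠ x} = {x} := by ext t; simp [eq_comm]
    rw [this]
    exact Real.volume_singleton
  have huIoc : Set.uIoc a x = Set.Ioc a x := Set.uIoc_of_le hax.le
  -- measurability
  have hF_meas : ∀ᶠ ρ in nhdsWithin 0 (Set.Ioi (0 : ℝ)),
      AEStronglyMeasurable (F ρ) (volume.restrict (Set.uIoc a x)) := by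
    filter_upwards [self_mem_nhdsWithin] with ρ (hρ : 0 < ρ)
    have hrestr : volume.restrict (Set.uIoc a x) = volume.restrict (Set.Ioo a x) := by
      rw [huIoc, Measure.restrict_congr_set Ioo_ae_eq_Ioc.symm]
    rw [hrestr]
    have hcont : ContinuousOn (F ρ) (Set.Ioo a x) := by
      apply ContinuousOn.mul
      apply ContinuousOn.mul
      · exact continuousOn_id.rpow_const fun t ht =>
          Or.inl (ne_of_gt (lt_trans ha ht.1))
      · apply ContinuousOn.rpow_const
        · exact (continuousOn_const.sub
            (continuousOn_id.rpow_const fun t ht =>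
              Or.inl (ne_of_gt (lt_trans ha ht.1)))).div_const ρ
        · intro t ht
          left
          have h0t : 0 < t := lt_trans ha ht.1
          have hlt : t ^ ρ < x ^ ρ := Real.rpow_lt_rpow h0t.le ht.2 hρ
          exact ne_of_gt (div_pos (by linarith) hρ)
      · exact hf.mono fun t ht => ⟨ht.1.le, ht.2.le⟩
    exact hcont.aestronglyMeasurable measurableSet_Ioo
  -- domination
  have h_bound : ∀ᶠ ρ in nhdsWithin 0 (Set.Ioi (0 : ℝ)),
      ∀ᵐ t : ℝ ∂volume, t ∈ Set.uIoc a x → ‖F ρ t‖ ≤ bound t := by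
    filter_upwards [Ioc_mem_nhdsGT one_pos] with ρ hρ
    filter_upwards [hne] with t htx htI
    rw [huIoc] at htI
    have htIcc : t ∈ Set.Icc a x := ⟨htI.1.le, htI.2⟩
    have ht0 : 0 < t := lt_of_lt_of_le ha htIcc.1
    have htlt : t < x := lt_of_le_of_ne htI.2 htx
    have hxt0 : 0 < x - t := by linarith
    obtain ⟨hlb, hub⟩ := katu_diff_bounds ha htIcc hρ
    set u : ℝ := (x ^ ρ - t ^ ρ) / ρ with hudef
    have hu0 : 0 < u := lt_of_lt_of_le (by positivity) hlb
    have h1 : t ^ (ρ - 1) ≤ c2 := (katu_rpow_bounds ha htIcc hρ).2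
    have h2 : u ^ (α - 1) ≤ (c2 ^ (α - 1) + c1 ^ (α - 1)) * (x - t) ^ (α - 1) := by
      rcases le_or_gt 1 α with hα1 | hα1
      · calc u ^ (α - 1) ≤ (c2 * (x - t)) ^ (α - 1) :=
              Real.rpow_le_rpow hu0.le hub (by linarith)
          _ = c2 ^ (α - 1) * (x - t) ^ (α - 1) := Real.mul_rpow hc2.le hxt0.le
          _ ≤ (c2 ^ (α - 1) + c1 ^ (α - 1)) * (x - t) ^ (α - 1) := by
              have : (0:ℝ) ≤ c1 ^ (α - 1) := Real.rpow_nonneg hc1.le _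
              have : (0:ℝ) ≤ (x - t) ^ (α - 1) := Real.rpow_nonneg hxt0.le _
              nlinarith [Real.rpow_nonneg hc1.le (α - 1),
                Real.rpow_nonneg hxt0.le (α - 1)]
      · calc u ^ (α - 1) ≤ (c1 * (x - t)) ^ (α - 1) :=
              Real.rpow_le_rpow_of_nonpos (by positivity) hlb (by linarith)
          _ = c1 ^ (α - 1) * (x - t) ^ (α - 1) := Real.mul_rpow hc1.le hxt0.le
          _ ≤ (c2 ^ (α - 1) + c1 ^ (α - 1)) * (x - t) ^ (α - 1) := by
              nlinarith [Real.rpow_nonneg hc2.le (α - 1),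
                Real.rpow_nonneg hxt0.le (α - 1)]
    have h3 : |f t| ≤ M := hM t htIcc
    have hnorm : ‖F ρ t‖ = t ^ (ρ - 1) * u ^ (α - 1) * |f t| := by
      rw [hFdef]
      simp only [Real.norm_eq_abs, abs_mul]
      rw [abs_of_nonneg (Real.rpow_nonneg ht0.le _),
        abs_of_nonneg (Real.rpow_nonneg hu0.le _)]
    rw [hnorm, hbounddef]
    have hnn1 : (0:ℝ) ≤ t ^ (ρ - 1) := Real.rpow_nonneg ht0.le _
    have hnn2 : (0:ℝ) ≤ u ^ (α - 1) := Real.rpow_nonneg hu0.le _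
    have hnn4 : (0:ℝ) ≤ (c2 ^ (α - 1) + c1 ^ (α - 1)) * (x - t) ^ (α - 1) := by
      have := Real.rpow_nonneg hc2.le (α - 1)
      have := Real.rpow_nonneg hc1.le (α - 1)
      have := Real.rpow_nonneg hxt0.le (α - 1)
      positivity
    exact mul_le_mul (mul_le_mul h1 h2 hnn2 hc2.le) h3 (abs_nonneg _)
      (by positivity)
  -- integrability of the bound
  have hbi : IntervalIntegrable bound volume a x := by
    have hbase : IntervalIntegrable (fun y : ℝ => y ^ (α - 1)) volume (x - a) (x - x) :=
      intervalIntegral.intervalIntegrable_rpow' (by linarith)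
    have hcomp := hbase.comp_sub_left x
    simp only [sub_sub_cancel, sub_self, sub_zero] at hcomp
    have : bound = fun t =>
        (c2 * (c2 ^ (α - 1) + c1 ^ (α - 1)) * M) * (x - t) ^ (α - 1) := by
      funext t; rw [hbounddef]; ring
    rw [this]
    exact hcomp.const_mul _
  -- pointwise limit
  have h_lim : ∀ᵐ t : ℝ ∂volume, t ∈ Set.uIoc a x →
      Tendsto (fun ρ => F ρ t) (nhdsWithin 0 (Set.Ioi (0 : ℝ))) (nhds (L t)) := by
    filter_upwards [hne] with t htx htI
    rw [huIoc] at htI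
    have ht0 : 0 < t := lt_trans ha htI.1
    have htlt : t < x := lt_of_le_of_ne htI.2 htx
    -- limit of t ^ (ρ - 1)
    have h1 : Tendsto (fun ρ : ℝ => t ^ (ρ - 1)) (nhdsWithin 0 (Set.Ioi (0 : ℝ)))
        (nhds (t ^ (-1 : ℝ))) := by
      have hc : ContinuousAt (fun y : ℝ => t ^ y) (-1) :=
        Real.continuousAt_const_rpow (ne_of_gt ht0)
      have : Tendsto (fun ρ : ℝ => ρ - 1) (nhds 0) (nhds (-1)) := by
        have h := ((continuous_id (X := ℝ)).sub (continuous_const (y := (1:ℝ)))).tendsto (0 : ℝ)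
        simpa [Pi.sub_def] using h
      exact (hc.tendsto.comp this).mono_left nhdsWithin_le_nhds
    -- limit of (x^ρ - t^ρ)/ρ
    have h2 : Tendsto (fun ρ : ℝ => (x ^ ρ - t ^ ρ) / ρ)
        (nhdsWithin 0 (Set.Ioi (0 : ℝ))) (nhds (Real.log (x / t))) := by
      have hd : HasDerivAt (fun ρ : ℝ => x ^ ρ - t ^ ρ)
          (Real.log x - Real.log t) 0 := by
        have hdx := (Real.hasStrictDerivAt_const_rpow hx0 0).hasDerivAt
        have hdt := (Real.hasStrictDerivAt_const_rpow ht0 0).hasDerivAt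
        simpa [Real.rpow_zero, Pi.sub_def] using hdx.sub hdt
      have hslope := hasDerivAt_iff_tendsto_slope.mp hd
      have hsub : Set.Ioi (0 : ℝ) ⊆ {(0 : ℝ)}ᶜ := fun y hy => ne_of_gt hy
      have hslope' := hslope.mono_left (nhdsWithin_mono 0 hsub)
      have heq : (fun ρ : ℝ => (x ^ ρ - t ^ ρ) / ρ) =ᶠ[nhdsWithin 0 (Set.Ioi (0:ℝ))]
          slope (fun ρ : ℝ => x ^ ρ - t ^ ρ) 0 := by
        filter_upwards [self_mem_nhdsWithin] with ρ (hρ : 0 < ρ)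
        simp [slope_def_field, Real.rpow_zero]
      rw [Real.log_div (ne_of_gt hx0) (ne_of_gt ht0)]
      exact (Tendsto.congr' heq.symm hslope')
    -- limit of the middle factor
    have hlogpos : 0 < Real.log (x / t) :=
      Real.log_pos ((one_lt_div ht0).2 htlt)
    have h3 : Tendsto (fun ρ : ℝ => ((x ^ ρ - t ^ ρ) / ρ) ^ (α - 1))
        (nhdsWithin 0 (Set.Ioi (0 : ℝ))) (nhds ((Real.log (x / t)) ^ (α - 1))) := by
      exact ((Real.continuousAt_rpow_const _ _ (Or.inl (ne_of_gt hlogpos))).tendsto).comp h2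
    have hprod := (h1.mul h3).mul (tendsto_const_nhds (x := f t))
    have : t ^ (-1 : ℝ) * (Real.log (x / t)) ^ (α - 1) * f t = L t := by
      rw [hLdef, Real.rpow_neg_one]
      ring
    rw [this] at hprod
    exact hprod
  -- dominated convergence
  have key := intervalIntegral.tendsto_integral_filter_of_dominated_convergence
    (μ := volume) (F := F) (f := L) (a := a) (b := x) bound hF_meas h_bound hbi h_lim
  have hfinal := key.const_mul (1 / Real.Gamma α)
  refine Tendsto.congr' ?_ hfinal
  filter_upwards [self_mem_nhdsWithin] with ρ (hρ : 0 < ρ)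
  have hre : (ρ ^ (1 - α) / Real.Gamma α) *
      (∫ t in a..x, t ^ (ρ - 1) * (x ^ ρ - t ^ ρ) ^ (α - 1) * f t) =
      (1 / Real.Gamma α) * (ρ ^ (1 - α) *
        ∫ t in a..x, t ^ (ρ - 1) * (x ^ ρ - t ^ ρ) ^ (α - 1) * f t) := by ring
  rw [hre]
  congr 1
  rw [← intervalIntegral.integral_const_mul]
  apply intervalIntegral.integral_congr
  intro t ht
  rw [Set.uIcc_of_le hax.le] at ht
  have ht0 : 0 < t := lt_of_lt_of_le ha ht.1
  have hxt : 0 ≤ x ^ ρ - t ^ ρ :=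
    sub_nonneg.2 (Real.rpow_le_rpow ht0.le ht.2 hρ.le)
  show t ^ (ρ - 1) * ((x ^ ρ - t ^ ρ) / ρ) ^ (α - 1) * f t =
    ρ ^ (1 - α) * (t ^ (ρ - 1) * (x ^ ρ - t ^ ρ) ^ (α - 1) * f t)
  rw [Real.div_rpow hxt hρ.le, show (1 - α : ℝ) = -(α - 1) by ring,
    Real.rpow_neg hρ.le]
  field_simp
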